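/- Let ω>0 and let χ∈C_c^∞(ℝ;ℝ) satisfy χ(η)=1 for |η|≤1/2 and χ(η)=0 for |η|≥1. For l∈{1,2,3} define m_l:ℝ³×ℝ→ℂ by m_l(ξ,η) := (1−χ(η/ω))·(iη)^{1/2}·ξ_l / (|ξ|²+iη), where (iη)^{1/2} is the principal branch of the square root. Then m_l is a well-defined C^∞ function on ℝ³×ℝ, m_l is bounded, and m_l satisfies the Marcinkiewicz multiplier condition: sup over all ε=(ε₁,ε₂,ε₃,ε₄)∈{0,1}⁴ and all (ξ,η)∈ℝ³×ℝ of |ξ₁^{ε₁}ξ₂^{ε₂}ξ₃^{ε₃}η^{ε₄} ∂_{ξ₁}^{ε₁}∂_{ξ₂}^{ε₂}∂_{ξ₃}^{ε₃}∂_η^{ε₄} m_l(ξ,η)| is finite. -/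

import Mathlib

open MeasureTheory ENNReal

noncomputable section

abbrev E3 : Type := Fin 3 → ℝ
abbrev ST3 : Type := E3 × ℝ

/-- The `i`-th spatial unit vector. -/
def e3 (i : Fin 3) : E3 := Pi.single i 1

/-- Directional derivative of a scalar function on space-time. -/
def dd (v : ST3) (φ : ST3 → ℝ) : ST3 → ℝ := fun p => fderiv ℝ φ p v

/-- Spatial partial derivative of a space-time scalar function. -/
def ddx (i : Fin 3) : (ST3 → ℝ) → ST3 → ℝ := dd (e3 i, 0)

/-- Time partial derivative of a space-time scalar function. -/
def ddt : (ST3 → ℝ) → ST3 → ℝ := dd (0, 1)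

def sing (i : Fin 3) : Fin 3 → ℕ := Pi.single i 1

/-- degree of a spatial multi-index -/
def deg (α : Fin 3 → ℕ) : ℕ := α 0 + α 1 + α 2

/-- Iterated derivative `∂_x^α ∂_t^κ` of a space-time scalar function. -/
def ddMulti (α : Fin 3 → ℕ) (κ : ℕ) (φ : ST3 → ℝ) : ST3 → ℝ :=
  (ddx 0)^[α 0] <| (ddx 1)^[α 1] <| (ddx 2)^[α 2] <| ddt^[κ] φ

/-- smooth compactly supported scalar test function on space-time -/
def IsTest (φ : ST3 → ℝ) : Prop := ContDiff ℝ (⊤ : ℕ∞) φ ∧ HasCompactSupport φ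

/-- smooth compactly supported vector test field on space-time -/
def IsTestV (Φ : ST3 → E3) : Prop := ContDiff ℝ (⊤ : ℕ∞) Φ ∧ HasCompactSupport Φ

/-- `g = ∂_x^α ∂_t^κ u` in the weak (distributional) sense on `ℝ³×ℝ`. -/
def IsWeakDeriv (α : Fin 3 → ℕ) (κ : ℕ) (u g : ST3 → ℝ) : Prop :=
  ∀ φ : ST3 → ℝ, IsTest φ →
    ∫ p : ST3, u p * ddMulti α κ φ p = (-1 : ℝ) ^ (deg α + κ) * ∫ p : ST3, g p * φ p

/-- Directional derivative of a scalar function on `ℝ³`. -/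
def dd3 (v : E3) (φ : E3 → ℝ) : E3 → ℝ := fun x => fderiv ℝ φ x v

def ddx3 (i : Fin 3) : (E3 → ℝ) → E3 → ℝ := dd3 (e3 i)

def ddMulti3 (α : Fin 3 → ℕ) (φ : E3 → ℝ) : E3 → ℝ :=
  (ddx3 0)^[α 0] <| (ddx3 1)^[α 1] <| (ddx3 2)^[α 2] φ

def IsTest3 (φ : E3 → ℝ) : Prop := ContDiff ℝ (⊤ : ℕ∞) φ ∧ HasCompactSupport φ

/-- `g = ∂_x^α u` in the weak sense on `ℝ³`. -/
def IsWeakDeriv3 (α : Fin 3 → ℕ) (u g : E3 → ℝ) : Prop :=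
  ∀ φ : E3 → ℝ, IsTest3 φ →
    ∫ x : E3, u x * ddMulti3 α φ x = (-1 : ℝ) ^ (deg α) * ∫ x : E3, g x * φ x

/-- `u` is `T`-time-periodic (vector valued). -/
def PeriodicST (T : ℝ) (u : ST3 → E3) : Prop := ∀ x : E3, ∀ t : ℝ, u (x, t + T) = u (x, t)

/-- `u` is `T`-time-periodic (scalar valued). -/
def PeriodicSTR (T : ℝ) (u : ST3 → ℝ) : Prop := ∀ x : E3, ∀ t : ℝ, u (x, t + T) = u (x, t)

/-- the space-time slab `ℝ³ × (0,T)` -/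
def PerSet (T : ℝ) : Set ST3 := (Set.univ : Set E3) ×ˢ Set.Ioo 0 T

/-- Lebesgue measure restricted to `ℝ³ × (0,T)` -/
def μT (T : ℝ) : Measure ST3 := volume.restrict (PerSet T)

/-- `L^s`-norm on `ℝ³×(0,T)` -/
def nst {F : Type*} [NormedAddCommGroup F] (T s : ℝ) (f : ST3 → F) : ℝ≥0∞ :=
  eLpNorm f (ENNReal.ofReal s) (μT T)

/-- `L^s`-norm on `ℝ³` -/
def n3 {F : Type*} [NormedAddCommGroup F] (s : ℝ) (f : E3 → F) : ℝ≥0∞ :=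
  eLpNorm f (ENNReal.ofReal s) (volume : Measure E3)

/-- weakly divergence free (space-time field, spatial divergence) -/
def DivFreeST (u : ST3 → E3) : Prop :=
  ∀ φ : ST3 → ℝ, IsTest φ → ∫ p : ST3, ∑ i, u p i * ddx i φ p = 0

/-- weakly divergence free on `ℝ³` -/
def DivFree3 (v : E3 → E3) : Prop :=
  ∀ φ : E3 → ℝ, IsTest3 φ → ∫ x : E3, ∑ i, v x i * ddx3 i φ x = 0

/-- the time average `(Pu)(x) = (1/T)∫₀ᵀ u(x,s) ds` -/
def timeAvg (T : ℝ) (u : ST3 → E3) : E3 → E3 :=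
  fun x => T⁻¹ • ∫ t in Set.Ioo (0 : ℝ) T, u (x, t)

/-- `Pu = 0` a.e. -/
def ZeroTimeAvg (T : ℝ) (u : ST3 → E3) : Prop :=
  ∀ᵐ x ∂(volume : Measure E3), timeAvg T u x = 0

/-- the norm of the space `X^q_Oseen(ℝ³)`; `g` is the weak gradient (`g x i j = ∂_j v_i`) and
`h` the weak second gradient of `v`. -/
def OseenNorm (lam q : ℝ) (v : E3 → E3) (g : E3 → Fin 3 → Fin 3 → ℝ)
    (h : E3 → Fin 3 → Fin 3 → Fin 3 → ℝ) : ℝ≥0∞ :=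
  ENNReal.ofReal (|lam| ^ ((1 : ℝ) / 2)) * n3 (2 * q / (2 - q)) v
    + ENNReal.ofReal (|lam| ^ ((1 : ℝ) / 4)) * n3 (4 * q / (4 - q)) g
    + ENNReal.ofReal |lam| * n3 q (fun x => fun i => g x i 0)
    + n3 q h

/-- membership of `v` in `X^q_Oseen(ℝ³)`, with weak derivative witnesses `g`, `h`. -/
structure IsOseen (lam q : ℝ) (v : E3 → E3) (g : E3 → Fin 3 → Fin 3 → ℝ)
    (h : E3 → Fin 3 → Fin 3 → Fin 3 → ℝ) : Prop where
  locint : LocallyIntegrable v (volume : Measure E3)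
  divfree : DivFree3 v
  grad : ∀ i j, IsWeakDeriv3 (sing j) (fun x => v x i) (fun x => g x i j)
  grad2 : ∀ i j k, IsWeakDeriv3 (sing j + sing k) (fun x => v x i) (fun x => h x i j k)
  fin : OseenNorm lam q v g h < ⊤

/-- the norm of `X^{q,r}_Oseen(ℝ³)` -/
def OseenNormQR (lam q r : ℝ) (v : E3 → E3) (g : E3 → Fin 3 → Fin 3 → ℝ)
    (h : E3 → Fin 3 → Fin 3 → Fin 3 → ℝ) : ℝ≥0∞ :=
  OseenNorm lam q v g h + n3 r h

/-- membership of `v` in `X^{q,r}_Oseen(ℝ³)` -/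
structure IsOseenQR (lam q r : ℝ) (v : E3 → E3) (g : E3 → Fin 3 → Fin 3 → ℝ)
    (h : E3 → Fin 3 → Fin 3 → Fin 3 → ℝ) : Prop where
  base : IsOseen lam q v g h
  finr : n3 r h < ⊤

/-- the norm `‖w‖_{2,1,q}` of the anisotropic space `W^{2,1}_q(ℝ³×(0,T))`; `wt` is the weak
time derivative, `g`/`h` the weak spatial gradient/second gradient of `w`. -/
def W21Norm (T q : ℝ) (w wt : ST3 → E3) (g : ST3 → Fin 3 → Fin 3 → ℝ)
    (h : ST3 → Fin 3 → Fin 3 → Fin 3 → ℝ) : ℝ≥0∞ :=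
  (nst T q w ^ q
      + ∑ j : Fin 3, nst T q (fun p => fun i => g p i j) ^ q
      + ∑ j : Fin 3, ∑ k : Fin 3, nst T q (fun p => fun i => h p i j k) ^ q
      + nst T q wt ^ q) ^ ((1 : ℝ) / q)

/-- membership of `w` in `W^{2,1}_q(ℝ³×(0,T))` (T-time-periodic), with witnesses -/
structure IsW21 (T q : ℝ) (w wt : ST3 → E3) (g : ST3 → Fin 3 → Fin 3 → ℝ)
    (h : ST3 → Fin 3 → Fin 3 → Fin 3 → ℝ) : Prop where
  periodic : PeriodicST T w
  locint : LocallyIntegrable w (volume : Measure ST3)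
  grad : ∀ i j, IsWeakDeriv (sing j) 0 (fun p => w p i) (fun p => g p i j)
  grad2 : ∀ i j k, IsWeakDeriv (sing j + sing k) 0 (fun p => w p i) (fun p => h p i j k)
  tderiv : ∀ i, IsWeakDeriv 0 1 (fun p => w p i) (fun p => wt p i)
  fin : W21Norm T q w wt g h < ⊤

/-- the norm `‖w‖_{2,1,q,r}` -/
def W21NormQR (T q r : ℝ) (w wt : ST3 → E3) (g : ST3 → Fin 3 → Fin 3 → ℝ)
    (h : ST3 → Fin 3 → Fin 3 → Fin 3 → ℝ) : ℝ≥0∞ :=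
  W21Norm T q w wt g h + W21Norm T r w wt g h

/-- membership of `w` in `W^{2,1}_{q,σ,⊥}(ℝ³×(0,T))` -/
structure IsW21σperp (T q : ℝ) (w wt : ST3 → E3) (g : ST3 → Fin 3 → Fin 3 → ℝ)
    (h : ST3 → Fin 3 → Fin 3 → Fin 3 → ℝ) : Prop where
  base : IsW21 T q w wt g h
  divfree : DivFreeST w
  avg : ZeroTimeAvg T w

/-- membership of `w` in `W^{2,1}_{q,r,σ,⊥}(ℝ³×(0,T))` -/
structure IsW21QRσperp (T q r : ℝ) (w wt : ST3 → E3) (g : ST3 → Fin 3 → Fin 3 → ℝ)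
    (h : ST3 → Fin 3 → Fin 3 → Fin 3 → ℝ) : Prop where
  baseq : IsW21 T q w wt g h
  baser : IsW21 T r w wt g h
  divfree : DivFreeST w
  avg : ZeroTimeAvg T w

/-- the norm of `X^{q,r}_pres(ℝ³×(0,T))`; `gp` is the weak spatial gradient of `p`. -/
def XpresNorm (T q r : ℝ) (p : ST3 → ℝ) (gp : ST3 → E3) : ℝ≥0∞ :=
  (∫⁻ t in Set.Ioo (0 : ℝ) T,
      (n3 (3 * q / (3 - q)) (fun x => p (x, t)) ^ q + n3 q (fun x => gp (x, t)) ^ q)) ^ ((1 : ℝ) / q)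
    + nst T r gp

/-- membership of `p` in `X^{q,r}_pres(ℝ³×(0,T))` -/
structure IsXpres (T q r : ℝ) (p : ST3 → ℝ) (gp : ST3 → E3) : Prop where
  periodic : PeriodicSTR T p
  locint : LocallyIntegrable p (volume : Measure ST3)
  grad : ∀ i, IsWeakDeriv (sing i) 0 p (fun pt => gp pt i)
  fin : XpresNorm T q r p gp < ⊤

/-- `(u,press)` solves `∂_t u − Δu − λ∂₁u + ∇press + (u·∇)u = f` in the sense of distributions
on `ℝ³×ℝ`; `gu` is the weak spatial gradient of `u`. -/
def NSWeakEq (lam : ℝ) (u : ST3 → E3) (gu : ST3 → Fin 3 → Fin 3 → ℝ)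
    (press : ST3 → ℝ) (f : ST3 → E3) : Prop :=
  ∀ Φ : ST3 → E3, IsTestV Φ →
    ∫ p : ST3, (- (∑ i, u p i * ddt (fun z => Φ z i) p)
        - (∑ i, ∑ j, u p i * ddx j (ddx j (fun z => Φ z i)) p)
        + lam * ∑ i, u p i * ddx 0 (fun z => Φ z i) p
        - press p * ∑ i, ddx i (fun z => Φ z i) p
        + ∑ i, (∑ j, u p j * gu p i j) * Φ p i)
      = ∫ p : ST3, ∑ i, f p i * Φ p i

/-- a strong solution in the class `X^{q,r}_Oseen × W^{2,1}_{q,r,σ,⊥} × X^{q,r}_pres`,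
with `u = v + w`. -/
structure IsStrongSol (T lam q r : ℝ) (f : ST3 → E3)
    (v : E3 → E3) (gv : E3 → Fin 3 → Fin 3 → ℝ) (hv : E3 → Fin 3 → Fin 3 → Fin 3 → ℝ)
    (w wt : ST3 → E3) (gw : ST3 → Fin 3 → Fin 3 → ℝ) (hw : ST3 → Fin 3 → Fin 3 → Fin 3 → ℝ)
    (press : ST3 → ℝ) (gp : ST3 → E3) : Prop where
  oseen : IsOseenQR lam q r v gv hv
  w21 : IsW21QRσperp T q r w wt gw hw
  pres : IsXpres T q r press gp
  eq : NSWeakEq lam (fun p => v p.1 + w p) (fun p => fun i => fun j => gv p.1 i j + gw p i j)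
    press f

/-- a T-time-periodic, divergence-free, smooth test field with compact spatial support -/
def PeriodicTestV (T : ℝ) (Φ : ST3 → E3) : Prop :=
  ContDiff ℝ (⊤ : ℕ∞) Φ ∧ (∀ x t, Φ (x, t + T) = Φ (x, t)) ∧
    (∀ p : ST3, ∑ i, fderiv ℝ (fun z => Φ z i) p (e3 i, 0) = 0) ∧
    (∃ R : ℝ, ∀ x : E3, ∀ t : ℝ, R ≤ ‖x‖ → Φ (x, t) = 0)

/-- physically reasonable weak time-periodic solution, with weak-gradient witness `gub` -/
structure IsPRWeakSol (T lam : ℝ) (f : ST3 → E3) (ub : ST3 → E3)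
    (gub : ST3 → Fin 3 → Fin 3 → ℝ) : Prop where
  periodic : PeriodicST T ub
  locint : LocallyIntegrable ub (volume : Measure ST3)
  grad : ∀ i j, IsWeakDeriv (sing j) 0 (fun p => ub p i) (fun p => gub p i j)
  divfree : DivFreeST ub
  /-- `ū ∈ L²(0,T; D^{1,2}_{0,σ})` (the `L⁶` part) -/
  mem6 : ∀ᵐ t ∂(volume.restrict (Set.Ioo (0 : ℝ) T)),
    MemLp (fun x => ub (x, t)) 6 (volume : Measure E3)
  /-- `ū ∈ L²(0,T; D^{1,2}_{0,σ})` (the gradient part) -/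
  gradL2 : (∫⁻ t in Set.Ioo (0 : ℝ) T,
      eLpNorm (fun x => gub (x, t)) 2 (volume : Measure E3) ^ (2 : ℝ)) < ⊤
  /-- `P⊥ū ∈ L^∞(0,T; L²(ℝ³))` -/
  perpL2 : ∃ M : ℝ≥0∞, M < ⊤ ∧ ∀ᵐ t ∂(volume.restrict (Set.Ioo (0 : ℝ) T)),
    eLpNorm (fun x => ub (x, t) - timeAvg T ub x) 2 (volume : Measure E3) ≤ M
  /-- the weak formulation, tested with periodic test fields -/
  weakform : ∀ Φ : ST3 → E3, PeriodicTestV T Φ →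
    ∫ p in PerSet T, (- (∑ i, ub p i * ddt (fun z => Φ z i) p)
        + (∑ i, ∑ j, gub p i j * ddx j (fun z => Φ z i) p)
        - lam * ∑ i, gub p i 0 * Φ p i
        + ∑ i, (∑ j, ub p j * gub p i j) * Φ p i)
      = ∫ p in PerSet T, ∑ i, f p i * Φ p i
  /-- the energy inequality -/
  energyineq : ∫ p in PerSet T, (∑ i, ∑ j, (gub p i j) ^ 2)
      ≤ ∫ p in PerSet T, ∑ i, f p i * ub p i

/-- the energy equality `∫₀ᵀ∫|∇u|² = ∫₀ᵀ∫ f·u` -/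
def EnergyEq (T : ℝ) (f : ST3 → E3) (gu : ST3 → Fin 3 → Fin 3 → ℝ) (u : ST3 → E3) : Prop :=
  ∫ p in PerSet T, (∑ i, ∑ j, (gu p i j) ^ 2) = ∫ p in PerSet T, ∑ i, f p i * u p i


/-- directional derivative of a complex-valued function on space-time -/
def ddC (v : ST3) (f : ST3 → ℂ) : ST3 → ℂ := fun p => fderiv ℝ f p v

/-- the iterated derivative `∂_{ξ₁}^{ε₁}∂_{ξ₂}^{ε₂}∂_{ξ₃}^{ε₃}∂_η^{ε₄}` -/
def MDer (ε : Fin 4 → ℕ) (f : ST3 → ℂ) : ST3 → ℂ :=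
  (ddC (e3 0, 0))^[ε 0] <| (ddC (e3 1, 0))^[ε 1] <| (ddC (e3 2, 0))^[ε 2] <|
    (ddC (0, 1))^[ε 3] f

/-- the multiplier `m_l(ξ,η) = (1−χ(η/ω))(iη)^{1/2}ξ_l / (|ξ|²+iη)` -/
def ml (ω : ℝ) (χ : ℝ → ℝ) (l : Fin 3) : ST3 → ℂ := fun p =>
  (((1 - χ (p.2 / ω) : ℝ) : ℂ) * (Complex.I * (p.2 : ℂ)) ^ ((1 : ℂ) / 2) * ((p.1 l : ℝ) : ℂ))
    / (((∑ i, (p.1 i) ^ 2 : ℝ) : ℂ) + Complex.I * (p.2 : ℂ))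

namespace Marc

/-- the four differentiation directions -/
def dir : Fin 4 → ST3 := ![(e3 0, 0), (e3 1, 0), (e3 2, 0), ((0 : E3), 1)]

/-- the weight associated to a direction -/
def wt : Fin 4 → ST3 → ℝ := ![fun p => p.1 0, fun p => p.1 1, fun p => p.1 2, fun p => p.2]

/-- iterated directional derivative along a list of directions (head outermost) -/
def iterD (l : List (Fin 4)) (f : ST3 → ℂ) : ST3 → ℂ :=
  l.foldr (fun j g => ddC (dir j) g) f

@[simp] lemma iterD_nil (f : ST3 → ℂ) : iterD [] f = f := rfl
@[simp] lemma iterD_cons (j : Fin 4) (l : List (Fin 4)) (f : ST3 → ℂ) :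
    iterD (j :: l) f = ddC (dir j) (iterD l f) := rfl

lemma iterD_append (l₁ l₂ : List (Fin 4)) (f : ST3 → ℂ) :
    iterD (l₁ ++ l₂) f = iterD l₁ (iterD l₂ f) := by
  induction l₁ with
  | nil => rfl
  | cons a l ih => simp [iterD_cons, ih]

@[simp] lemma ddC_const (v : ST3) (k : ℂ) : ddC v (fun _ => k) = fun _ => 0 := by
  funext p; simp [ddC]

@[simp] lemma iterD_zero (l : List (Fin 4)) : iterD l (fun _ => (0:ℂ)) = fun _ => 0 := by
  induction l with
  | nil => rfl
  | cons a l ih => rw [iterD_cons, ih]; exact ddC_const _ 0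

lemma iterD_const (l : List (Fin 4)) (hl : l ≠ []) (k : ℂ) :
    iterD l (fun _ => k) = fun _ => 0 := by
  cases l with
  | nil => exact absurd rfl hl
  | cons a l =>
    cases l with
    | nil => exact ddC_const (dir a) k
    | cons b l =>
      rw [iterD_cons, iterD_const (b :: l) (by simp) k]
      exact ddC_const (dir a) 0

lemma ddC_congr {f g : ST3 → ℂ} {p : ST3} (h : f =ᶠ[nhds p] g) (v : ST3) :
    ddC v f p = ddC v g p := by
  simp only [ddC]; rw [Filter.EventuallyEq.fderiv_eq h]

lemma iterD_congr {s : Set ST3} (hs : IsOpen s) {f g : ST3 → ℂ}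
    (h : Set.EqOn f g s) (l : List (Fin 4)) : Set.EqOn (iterD l f) (iterD l g) s := by
  induction l with
  | nil => exact h
  | cons a l ih =>
    intro p hp
    exact ddC_congr (Filter.eventuallyEq_of_mem (hs.mem_nhds hp) ih) (dir a)

lemma ddC_contDiffOn {s : Set ST3} (hs : IsOpen s) {f : ST3 → ℂ}
    (hf : ContDiffOn ℝ (⊤:ℕ∞) f s) (v : ST3) : ContDiffOn ℝ (⊤:ℕ∞) (ddC v f) s := by
  have h1 : ContDiffOn ℝ (⊤:ℕ∞) (fderiv ℝ f) s := by
    apply ContDiffOn.fderiv_of_isOpen hf hs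
    exact le_of_eq (by norm_cast)
  exact h1.clm_apply contDiffOn_const

lemma iterD_contDiffOn {s : Set ST3} (hs : IsOpen s) {f : ST3 → ℂ}
    (hf : ContDiffOn ℝ (⊤:ℕ∞) f s) (l : List (Fin 4)) :
    ContDiffOn ℝ (⊤:ℕ∞) (iterD l f) s := by
  induction l with
  | nil => exact hf
  | cons a l ih => exact ddC_contDiffOn hs ih (dir a)

lemma ddC_add {f g : ST3 → ℂ} {p : ST3} (hf : DifferentiableAt ℝ f p)
    (hg : DifferentiableAt ℝ g p) (v : ST3) :
    ddC v (fun q => f q + g q) p = ddC v f p + ddC v g p := by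
  simp [ddC, fderiv_fun_add hf hg]

lemma ddC_mul {f g : ST3 → ℂ} {p : ST3} (hf : DifferentiableAt ℝ f p)
    (hg : DifferentiableAt ℝ g p) (v : ST3) :
    ddC v (fun q => f q * g q) p = ddC v f p * g p + f p * ddC v g p := by
  simp only [ddC]
  rw [fderiv_fun_mul hf hg]
  simp [mul_comm, add_comm]

-- splits machinery on plain lists, generic
variable {α : Type*}

def splits : List α → List (List α × List α)
  | [] => [([], [])]
  | a :: l => (splits l).flatMap (fun st => [(st.1, a :: st.2), (a :: st.1, st.2)])

lemma splits_mem : ∀ (l : List α), ∀ st ∈ splits l,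
    st.1.Sublist l ∧ st.2.Sublist l ∧ (st.1 ++ st.2).Perm l := by
  intro l
  induction l with
  | nil => intro st hst; simp [splits] at hst; subst hst; simp
  | cons a l ih =>
    intro st hst
    simp only [splits, List.mem_flatMap] at hst
    obtain ⟨⟨s, t⟩, hmem, hst⟩ := hst
    obtain ⟨h1, h2, h3⟩ := ih ⟨s, t⟩ hmem
    have hst' : st = (s, a :: t) ∨ st = (a :: s, t) := by simpa using hst
    rcases hst' with rfl | rfl
    · exact ⟨h1.cons _, h2.cons₂ _, by
        refine (List.perm_append_comm.trans ?_)
        simpa using ((List.perm_append_comm.trans h3).cons a)⟩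
    · exact ⟨h1.cons₂ _, h2.cons _, by simpa using h3.cons a⟩

lemma splits_head : ∀ (l : List α), ∃ rest, splits l = ([], l) :: rest ∧
    ∀ st ∈ rest, st.1 ≠ [] := by
  intro l
  induction l with
  | nil => exact ⟨[], rfl, by simp⟩
  | cons a l ih =>
    obtain ⟨rest, heq, hne⟩ := ih
    refine ⟨([a], l) :: rest.flatMap (fun st => [(st.1, a :: st.2), (a :: st.1, st.2)]), ?_, ?_⟩
    · simp [splits, heq]
    · intro st hst
      simp only [List.mem_cons, List.mem_flatMap] at hst
      rcases hst with rfl | ⟨⟨s, t⟩, hmem, hst⟩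
      · simp
      · have hthis := hne ⟨s, t⟩ hmem
        have hst' : st = (s, a :: t) ∨ st = (a :: s, t) := by simpa using hst
        rcases hst' with rfl | rfl
        · exact hthis
        · simp


lemma iterD_diffAt {s : Set ST3} (hs : IsOpen s) {f : ST3 → ℂ}
    (hf : ContDiffOn ℝ (⊤:ℕ∞) f s) (l : List (Fin 4)) {p : ST3} (hp : p ∈ s) :
    DifferentiableAt ℝ (iterD l f) p :=
  ((iterD_contDiffOn hs hf l).contDiffAt (hs.mem_nhds hp)).differentiableAt
    (by simp)

lemma sum_flatMap {α : Type*} {M : Type*} [AddCommMonoid M] (l : List α) (g : α → List M) :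
    (l.flatMap g).sum = (l.map fun a => (g a).sum).sum := by
  induction l with
  | nil => simp
  | cons a l ih => simp [List.flatMap_cons, List.sum_append, ih]

lemma diff_list_sum {ι : Type} (L : List ι) (F : ι → ST3 → ℂ) (p : ST3)
    (hF : ∀ i ∈ L, DifferentiableAt ℝ (F i) p) :
    DifferentiableAt ℝ (fun q => (L.map (fun i => F i q)).sum) p := by
  induction L with
  | nil => simpa using differentiableAt_const (0:ℂ)
  | cons a L ih =>
    simp only [List.map_cons, List.sum_cons]
    exact (hF a (by simp)).add (ih (fun i hi => hF i (by simp [hi])))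

lemma ddC_list_sum {ι : Type} (L : List ι) (F : ι → ST3 → ℂ) (p : ST3)
    (hF : ∀ i ∈ L, DifferentiableAt ℝ (F i) p) (v : ST3) :
    ddC v (fun q => (L.map (fun i => F i q)).sum) p = (L.map (fun i => ddC v (F i) p)).sum := by
  induction L with
  | nil => simp only [List.map_nil, List.sum_nil]; exact congrFun (ddC_const v 0) p
  | cons a L ih =>
    simp only [List.map_cons, List.sum_cons]
    rw [ddC_add (hF a (by simp)) (diff_list_sum L F p (fun i hi => hF i (by simp [hi]))) v,
      ih (fun i hi => hF i (by simp [hi]))]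

lemma iterD_mul {s : Set ST3} (hs : IsOpen s) {f g : ST3 → ℂ}
    (hf : ContDiffOn ℝ (⊤:ℕ∞) f s) (hg : ContDiffOn ℝ (⊤:ℕ∞) g s) :
    ∀ l : List (Fin 4), ∀ p ∈ s,
      iterD l (fun q => f q * g q) p
        = ((splits l).map (fun st => iterD st.1 f p * iterD st.2 g p)).sum := by
  intro l
  induction l with
  | nil => intro p _; simp [splits]
  | cons a l ih =>
    intro p hp
    have hdiff : ∀ st ∈ splits l,
        DifferentiableAt ℝ (fun q => iterD st.1 f q * iterD st.2 g q) p := by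
      intro st _
      exact (iterD_diffAt hs hf st.1 hp).mul (iterD_diffAt hs hg st.2 hp)
    have h1 : iterD (a :: l) (fun q => f q * g q) p
        = ddC (dir a)
            (fun q => ((splits l).map (fun st => iterD st.1 f q * iterD st.2 g q)).sum) p := by
      rw [iterD_cons]
      exact ddC_congr (Filter.eventuallyEq_of_mem (hs.mem_nhds hp) (fun q hq => ih q hq)) _
    rw [h1, ddC_list_sum (splits l) _ p hdiff (dir a)]
    have h2 : ∀ st ∈ splits l,
        ddC (dir a) (fun q => iterD st.1 f q * iterD st.2 g q) p
          = iterD (a :: st.1) f p * iterD st.2 g p + iterD st.1 f p * iterD (a :: st.2) g p := by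
      intro st _
      rw [ddC_mul (iterD_diffAt hs hf st.1 hp) (iterD_diffAt hs hg st.2 hp)]
      rfl
    rw [List.map_congr_left h2]
    show _ = ((splits (a :: l)).map
      (fun st => iterD st.1 f p * iterD st.2 g p)).sum
    rw [show splits (a :: l)
        = (splits l).flatMap (fun st => [(st.1, a :: st.2), (a :: st.1, st.2)]) from rfl]
    rw [List.map_flatMap, sum_flatMap]
    refine congrArg List.sum (List.map_congr_left ?_)
    intro st _
    simp [add_comm]

/-- the region away from `η = 0` -/
def U (c : ℝ) : Set ST3 := {p | c < |p.2|}

lemma isOpen_U (c : ℝ) : IsOpen (U c) :=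
  isOpen_lt continuous_const (continuous_abs.comp continuous_snd)

/-- the parabolic weight `|ξ|² + |η|` -/
def Mf (p : ST3) : ℝ := (∑ i, (p.1 i) ^ 2) + |p.2|

lemma Mf_nonneg (p : ST3) : 0 ≤ Mf p :=
  add_nonneg (Finset.sum_nonneg fun i _ => sq_nonneg _) (abs_nonneg _)

lemma snd_le_Mf (p : ST3) : |p.2| ≤ Mf p :=
  le_add_of_nonneg_left (Finset.sum_nonneg fun i _ => sq_nonneg _)

lemma Mf_pos {c : ℝ} (hc : 0 ≤ c) {p : ST3} (hp : p ∈ U c) : 0 < Mf p := by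
  have hp' : c < |p.2| := hp
  have := snd_le_Mf p
  linarith

/-- product of weights along a list -/
def WL (l : List (Fin 4)) (p : ST3) : ℝ := (l.map (fun j => |wt j p|)).prod

lemma WL_nonneg (l : List (Fin 4)) (p : ST3) : 0 ≤ WL l p := by
  apply List.prod_nonneg
  intro a ha
  obtain ⟨j, _, rfl⟩ := List.mem_map.1 ha
  exact abs_nonneg _

lemma WL_split {s t l : List (Fin 4)} (h : (s ++ t).Perm l) (p : ST3) :
    WL l p = WL s p * WL t p := by
  unfold WL
  rw [← List.Perm.prod_eq ((h.map (fun j => |wt j p|))), List.map_append, List.prod_append]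

@[simp] lemma WL_nil (p : ST3) : WL [] p = 1 := rfl

/-- the symbol class of parabolic order `d` on `U c` -/
structure IsSym (c d : ℝ) (f : ST3 → ℂ) : Prop where
  smooth : ContDiffOn ℝ (⊤:ℕ∞) f (U c)
  bound : ∀ l : List (Fin 4), l.Sublist [0,1,2,3] → ∃ C, 0 ≤ C ∧
    ∀ p ∈ U c, WL l p * ‖iterD l f p‖ ≤ C * Mf p ^ (d/2)

lemma IsSym.boundFun {c d : ℝ} {f : ST3 → ℂ} (h : IsSym c d f) :
    ∃ C : List (Fin 4) → ℝ, ∀ l : List (Fin 4), l.Sublist [0,1,2,3] →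
      0 ≤ C l ∧ ∀ p ∈ U c, WL l p * ‖iterD l f p‖ ≤ C l * Mf p ^ (d/2) := by
  refine ⟨fun l => if hl : l.Sublist [0,1,2,3] then (h.bound l hl).choose else 0, ?_⟩
  intro l hl
  simp only [dif_pos hl]
  exact (h.bound l hl).choose_spec

lemma norm_list_sum_le {ι : Type} (L : List ι) (F : ι → ℂ) :
    ‖(L.map F).sum‖ ≤ (L.map (fun i => ‖F i‖)).sum := by
  induction L with
  | nil => simp
  | cons a L ih =>
    simp only [List.map_cons, List.sum_cons]
    exact le_trans (norm_add_le _ _) (by gcongr)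

theorem IsSym.mul {c d e : ℝ} {f g : ST3 → ℂ} (hc : 0 ≤ c)
    (hf : IsSym c d f) (hg : IsSym c e g) : IsSym c (d + e) (fun p => f p * g p) := by
  refine ⟨hf.smooth.mul hg.smooth, ?_⟩
  intro l hl
  obtain ⟨Cf, hCf⟩ := hf.boundFun
  obtain ⟨Cg, hCg⟩ := hg.boundFun
  have hsub : ∀ st ∈ splits l, st.1.Sublist [0,1,2,3] ∧ st.2.Sublist [0,1,2,3] ∧
      (st.1 ++ st.2).Perm l := by
    intro st hst
    obtain ⟨h1, h2, h3⟩ := splits_mem l st hst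
    exact ⟨h1.trans hl, h2.trans hl, h3⟩
  refine ⟨((splits l).map (fun st => Cf st.1 * Cg st.2)).sum, ?_, ?_⟩
  · apply List.sum_nonneg
    intro x hx
    obtain ⟨st, hst, rfl⟩ := List.mem_map.1 hx
    exact mul_nonneg (hCf st.1 (hsub st hst).1).1 (hCg st.2 (hsub st hst).2.1).1
  · intro p hp
    have hM : (0:ℝ) < Mf p := Mf_pos hc hp
    rw [iterD_mul (isOpen_U c) hf.smooth hg.smooth l p hp]
    calc WL l p * ‖((splits l).map (fun st => iterD st.1 f p * iterD st.2 g p)).sum‖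
        ≤ WL l p * ((splits l).map (fun st => ‖iterD st.1 f p * iterD st.2 g p‖)).sum := by
          exact mul_le_mul_of_nonneg_left (norm_list_sum_le _ _) (WL_nonneg l p)
      _ = ((splits l).map (fun st => WL l p * ‖iterD st.1 f p * iterD st.2 g p‖)).sum := by
          rw [← List.sum_map_mul_left]
      _ ≤ ((splits l).map (fun st => (Cf st.1 * Cg st.2) * Mf p ^ ((d+e)/2))).sum := by
          apply List.sum_le_sum
          intro st hst
          obtain ⟨hs1, hs2, hperm⟩ := hsub st hst
          have e1 : WL l p * ‖iterD st.1 f p * iterD st.2 g p‖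
              = (WL st.1 p * ‖iterD st.1 f p‖) * (WL st.2 p * ‖iterD st.2 g p‖) := by
            rw [WL_split hperm p, norm_mul]; ring
          rw [e1]
          have b1 := (hCf st.1 hs1).2 p hp
          have b2 := (hCg st.2 hs2).2 p hp
          calc (WL st.1 p * ‖iterD st.1 f p‖) * (WL st.2 p * ‖iterD st.2 g p‖)
              ≤ (Cf st.1 * Mf p ^ (d/2)) * (Cg st.2 * Mf p ^ (e/2)) := by
                exact mul_le_mul b1 b2
                  (mul_nonneg (WL_nonneg _ _) (norm_nonneg _))
                  (mul_nonneg (hCf st.1 hs1).1 (Real.rpow_nonneg hM.le _))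
            _ = (Cf st.1 * Cg st.2) * Mf p ^ ((d+e)/2) := by
                rw [add_div, Real.rpow_add hM]; ring
      _ = ((splits l).map (fun st => Cf st.1 * Cg st.2)).sum * Mf p ^ ((d+e)/2) := by
          rw [← List.sum_map_mul_right]

lemma iterD_add {s : Set ST3} (hs : IsOpen s) {f g : ST3 → ℂ}
    (hf : ContDiffOn ℝ (⊤:ℕ∞) f s) (hg : ContDiffOn ℝ (⊤:ℕ∞) g s) :
    ∀ l : List (Fin 4), ∀ p ∈ s,
      iterD l (fun q => f q + g q) p = iterD l f p + iterD l g p := by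
  intro l
  induction l with
  | nil => intro p _; rfl
  | cons a l ih =>
    intro p hp
    have h1 : iterD (a :: l) (fun q => f q + g q) p
        = ddC (dir a) (fun q => iterD l f q + iterD l g q) p := by
      rw [iterD_cons]
      exact ddC_congr (Filter.eventuallyEq_of_mem (hs.mem_nhds hp) (fun q hq => ih q hq)) _
    rw [h1, ddC_add (iterD_diffAt hs hf l hp) (iterD_diffAt hs hg l hp)]
    rfl

lemma iterD_cmul {s : Set ST3} (hs : IsOpen s) {f : ST3 → ℂ} (k : ℂ)
    (hf : ContDiffOn ℝ (⊤:ℕ∞) f s) :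
    ∀ l : List (Fin 4), ∀ p ∈ s,
      iterD l (fun q => k * f q) p = k * iterD l f p := by
  intro l
  induction l with
  | nil => intro p _; rfl
  | cons a l ih =>
    intro p hp
    have h1 : iterD (a :: l) (fun q => k * f q) p
        = ddC (dir a) (fun q => k * iterD l f q) p := by
      rw [iterD_cons]
      exact ddC_congr (Filter.eventuallyEq_of_mem (hs.mem_nhds hp) (fun q hq => ih q hq)) _
    rw [h1]
    show fderiv ℝ (fun q => k * iterD l f q) p (dir a) = _
    rw [fderiv_const_mul (iterD_diffAt hs hf l hp)]
    rfl

theorem IsSym.add {c d : ℝ} {f g : ST3 → ℂ}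
    (hf : IsSym c d f) (hg : IsSym c d g) : IsSym c d (fun p => f p + g p) := by
  refine ⟨hf.smooth.add hg.smooth, ?_⟩
  intro l hl
  obtain ⟨C1, h1, hb1⟩ := hf.bound l hl
  obtain ⟨C2, h2, hb2⟩ := hg.bound l hl
  refine ⟨C1 + C2, by linarith, ?_⟩
  intro p hp
  rw [iterD_add (isOpen_U c) hf.smooth hg.smooth l p hp]
  calc WL l p * ‖iterD l f p + iterD l g p‖
      ≤ WL l p * (‖iterD l f p‖ + ‖iterD l g p‖) :=
        mul_le_mul_of_nonneg_left (norm_add_le _ _) (WL_nonneg l p)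
    _ = WL l p * ‖iterD l f p‖ + WL l p * ‖iterD l g p‖ := by ring
    _ ≤ C1 * Mf p ^ (d/2) + C2 * Mf p ^ (d/2) := add_le_add (hb1 p hp) (hb2 p hp)
    _ = (C1 + C2) * Mf p ^ (d/2) := by ring

theorem IsSym.cmul {c d : ℝ} {f : ST3 → ℂ} (k : ℂ)
    (hf : IsSym c d f) : IsSym c d (fun p => k * f p) := by
  refine ⟨(contDiffOn_const).mul hf.smooth, ?_⟩
  intro l hl
  obtain ⟨C1, h1, hb1⟩ := hf.bound l hl
  refine ⟨‖k‖ * C1, mul_nonneg (norm_nonneg k) h1, ?_⟩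
  intro p hp
  rw [iterD_cmul (isOpen_U c) k hf.smooth l p hp, norm_mul]
  calc WL l p * (‖k‖ * ‖iterD l f p‖) = ‖k‖ * (WL l p * ‖iterD l f p‖) := by ring
    _ ≤ ‖k‖ * (C1 * Mf p ^ (d/2)) := mul_le_mul_of_nonneg_left (hb1 p hp) (norm_nonneg k)
    _ = ‖k‖ * C1 * Mf p ^ (d/2) := by ring

theorem IsSym.inv {c d : ℝ} {f : ST3 → ℂ} (hc : 0 ≤ c) (hf : IsSym c d f)
    {c' : ℝ} (hc' : 0 < c') (hlow : ∀ p ∈ U c, c' * Mf p ^ (d/2) ≤ ‖f p‖) :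
    IsSym c (-d) (fun p => (f p)⁻¹) := by
  have hne : ∀ p ∈ U c, f p ≠ 0 := by
    intro p hp
    have := hlow p hp
    have h0 : 0 < c' * Mf p ^ (d/2) :=
      mul_pos hc' (Real.rpow_pos_of_pos (Mf_pos hc hp) _)
    intro h
    rw [h, norm_zero] at this
    linarith
  have hsmooth : ContDiffOn ℝ (⊤:ℕ∞) (fun p => (f p)⁻¹) (U c) := hf.smooth.inv hne
  refine ⟨hsmooth, ?_⟩
  obtain ⟨Cf, hCf⟩ := hf.boundFun
  -- bound on the inverse norm
  have hinv_bound : ∀ p ∈ U c, ‖(f p)⁻¹‖ ≤ c'⁻¹ * Mf p ^ (-d/2) := by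
    intro p hp
    have hM := Mf_pos hc hp
    have h0 : 0 < c' * Mf p ^ (d/2) := mul_pos hc' (Real.rpow_pos_of_pos hM _)
    rw [norm_inv]
    calc ‖f p‖⁻¹ ≤ (c' * Mf p ^ (d/2))⁻¹ := by
          apply inv_anti₀ h0 (hlow p hp)
      _ = c'⁻¹ * Mf p ^ (-d/2) := by
          rw [mul_inv, neg_div, Real.rpow_neg hM.le]
  have key : ∀ n : ℕ, ∀ l : List (Fin 4), l.Sublist [0,1,2,3] → l.length ≤ n →
      ∃ C, 0 ≤ C ∧ ∀ p ∈ U c, WL l p * ‖iterD l (fun q => (f q)⁻¹) p‖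
        ≤ C * Mf p ^ (-d/2) := by
    intro n
    induction n with
    | zero =>
      intro l hl hlen
      have : l = [] := List.length_eq_zero_iff.1 (Nat.le_zero.1 hlen)
      subst this
      refine ⟨c'⁻¹, by positivity, ?_⟩
      intro p hp
      simpa using hinv_bound p hp
    | succ n ih =>
      intro l hl hlen
      rcases eq_or_ne l [] with rfl | hlne
      · refine ⟨c'⁻¹, by positivity, ?_⟩
        intro p hp
        simpa using hinv_bound p hp
      -- choice function from the induction hypothesis
      obtain ⟨Ci, hCi⟩ : ∃ Ci : List (Fin 4) → ℝ, ∀ t : List (Fin 4),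
          t.Sublist [0,1,2,3] → t.length ≤ n → 0 ≤ Ci t ∧
            ∀ p ∈ U c, WL t p * ‖iterD t (fun q => (f q)⁻¹) p‖ ≤ Ci t * Mf p ^ (-d/2) := by
        refine ⟨fun t => if h : t.Sublist [0,1,2,3] ∧ t.length ≤ n
          then (ih t h.1 h.2).choose else 0, ?_⟩
        intro t h1 h2
        simp only [dif_pos (And.intro h1 h2)]
        exact (ih t h1 h2).choose_spec
      obtain ⟨rest, heq, hrest⟩ := splits_head l
      have hsub : ∀ st ∈ rest, st.1.Sublist [0,1,2,3] ∧ st.2.Sublist [0,1,2,3] ∧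
          (st.1 ++ st.2).Perm l ∧ st.2.length ≤ n := by
        intro st hst
        have hmem : st ∈ splits l := by rw [heq]; exact List.mem_cons_of_mem _ hst
        obtain ⟨h1, h2, h3⟩ := splits_mem l st hmem
        refine ⟨h1.trans hl, h2.trans hl, h3, ?_⟩
        have hlen2 : st.1.length + st.2.length = l.length := by
          simpa using h3.length_eq
        have h1ne : st.1 ≠ [] := hrest st hst
        have : 1 ≤ st.1.length := List.length_pos_iff.2 h1ne
        omega
      refine ⟨c'⁻¹ * (rest.map (fun st => Cf st.1 * Ci st.2)).sum, ?_, ?_⟩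
      · apply mul_nonneg (by positivity)
        apply List.sum_nonneg
        intro x hx
        obtain ⟨st, hst, rfl⟩ := List.mem_map.1 hx
        obtain ⟨hs1, hs2, _, hn2⟩ := hsub st hst
        exact mul_nonneg (hCf st.1 hs1).1 (hCi st.2 hs2 hn2).1
      intro p hp
      have hM := Mf_pos hc hp
      -- the identity from differentiating f * f⁻¹ = 1
      have hone : Set.EqOn (fun q => f q * (f q)⁻¹) (fun _ => (1:ℂ)) (U c) := by
        intro q hq
        exact mul_inv_cancel₀ (hne q hq)
      have hz : iterD l (fun q => f q * (f q)⁻¹) p = 0 := by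
        have := iterD_congr (isOpen_U c) hone l hp
        rw [this, iterD_const l hlne 1]
      rw [iterD_mul (isOpen_U c) hf.smooth hsmooth l p hp, heq] at hz
      simp only [List.map_cons, List.sum_cons, iterD_nil] at hz
      have hiso : f p * iterD l (fun q => (f q)⁻¹) p
          = -(rest.map (fun st => iterD st.1 f p * iterD st.2 (fun q => (f q)⁻¹) p)).sum := by
        linear_combination hz
      have hval : iterD l (fun q => (f q)⁻¹) p
          = -(f p)⁻¹ * (rest.map
              (fun st => iterD st.1 f p * iterD st.2 (fun q => (f q)⁻¹) p)).sum := by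
        have hfp := hne p hp
        calc iterD l (fun q => (f q)⁻¹) p
            = (f p)⁻¹ * (f p * iterD l (fun q => (f q)⁻¹) p) := by
              rw [← mul_assoc, inv_mul_cancel₀ hfp, one_mul]
          _ = _ := by rw [hiso]; ring
      rw [hval]
      have hMpow : Mf p ^ (d/2) * Mf p ^ (-d/2) = 1 := by
        rw [← Real.rpow_add hM, show d / 2 + -d / 2 = 0 by ring, Real.rpow_zero]
      calc WL l p * ‖-(f p)⁻¹ * (rest.map
              (fun st => iterD st.1 f p * iterD st.2 (fun q => (f q)⁻¹) p)).sum‖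
          = ‖(f p)⁻¹‖ * (WL l p * ‖(rest.map
              (fun st => iterD st.1 f p * iterD st.2 (fun q => (f q)⁻¹) p)).sum‖) := by
            rw [norm_mul, norm_neg]; ring
        _ ≤ (c'⁻¹ * Mf p ^ (-d/2)) * ((rest.map (fun st => Cf st.1 * Ci st.2)).sum
              * (Mf p ^ (d/2) * Mf p ^ (-d/2))) := by
            apply mul_le_mul (hinv_bound p hp) ?_
              (mul_nonneg (WL_nonneg l p) (norm_nonneg _)) (by positivity)
            calc WL l p * ‖(rest.map
                  (fun st => iterD st.1 f p * iterD st.2 (fun q => (f q)⁻¹) p)).sum‖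
                ≤ WL l p * (rest.map (fun st =>
                    ‖iterD st.1 f p * iterD st.2 (fun q => (f q)⁻¹) p‖)).sum :=
                  mul_le_mul_of_nonneg_left (norm_list_sum_le _ _) (WL_nonneg l p)
              _ = (rest.map (fun st => WL l p *
                    ‖iterD st.1 f p * iterD st.2 (fun q => (f q)⁻¹) p‖)).sum := by
                  rw [← List.sum_map_mul_left]
              _ ≤ (rest.map (fun st => (Cf st.1 * Ci st.2)
                    * (Mf p ^ (d/2) * Mf p ^ (-d/2)))).sum := by
                  apply List.sum_le_sum
                  intro st hst
                  obtain ⟨hs1, hs2, hperm, hn2⟩ := hsub st hst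
                  have e1 : WL l p * ‖iterD st.1 f p * iterD st.2 (fun q => (f q)⁻¹) p‖
                      = (WL st.1 p * ‖iterD st.1 f p‖)
                        * (WL st.2 p * ‖iterD st.2 (fun q => (f q)⁻¹) p‖) := by
                    rw [WL_split hperm p, norm_mul]; ring
                  rw [e1]
                  have b1 := (hCf st.1 hs1).2 p hp
                  have b2 := (hCi st.2 hs2 hn2).2 p hp
                  calc (WL st.1 p * ‖iterD st.1 f p‖)
                        * (WL st.2 p * ‖iterD st.2 (fun q => (f q)⁻¹) p‖)
                      ≤ (Cf st.1 * Mf p ^ (d/2)) * (Ci st.2 * Mf p ^ (-d/2)) :=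
                        mul_le_mul b1 b2
                          (mul_nonneg (WL_nonneg _ _) (norm_nonneg _))
                          (mul_nonneg (hCf st.1 hs1).1 (Real.rpow_nonneg hM.le _))
                    _ = (Cf st.1 * Ci st.2) * (Mf p ^ (d/2) * Mf p ^ (-d/2)) := by ring
              _ = (rest.map (fun st => Cf st.1 * Ci st.2)).sum
                    * (Mf p ^ (d/2) * Mf p ^ (-d/2)) := by
                  rw [← List.sum_map_mul_right]
        _ = (c'⁻¹ * (rest.map (fun st => Cf st.1 * Ci st.2)).sum) * Mf p ^ (-d/2) := by
            rw [hMpow]; ring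
  intro l hl
  exact key l.length l hl le_rfl

/-! ### Atoms -/

lemma ddC_clm (L : ST3 →L[ℝ] ℂ) (v : ST3) : ddC v (fun p => L p) = fun _ => L v := by
  funext p
  simp [ddC, L.fderiv]

lemma iterD_clm (L : ST3 →L[ℝ] ℂ) : ∀ (l : List (Fin 4)) (j : Fin 4),
    iterD (j :: l) (fun p => L p) = fun _ => if l = [] then L (dir j) else 0 := by
  intro l
  induction l with
  | nil => intro j; simp [iterD_cons, ddC_clm]
  | cons b t ih =>
    intro j
    rw [iterD_cons, ih b]
    by_cases h : t = [] <;> simp [h, ddC_const]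

/-- the `ξ_i` coordinate as a continuous linear map -/
def Lx (i : Fin 3) : ST3 →L[ℝ] ℂ :=
  Complex.ofRealCLM.comp ((ContinuousLinearMap.proj i).comp (ContinuousLinearMap.fst ℝ E3 ℝ))

/-- the `η` coordinate as a continuous linear map -/
def Lt : ST3 →L[ℝ] ℂ := Complex.ofRealCLM.comp (ContinuousLinearMap.snd ℝ E3 ℝ)

lemma Lx_apply (i : Fin 3) (p : ST3) : Lx i p = ((p.1 i : ℝ) : ℂ) := rfl
lemma Lt_apply (p : ST3) : Lt p = ((p.2 : ℝ) : ℂ) := rfl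

lemma sq_le_Mf (i : Fin 3) (p : ST3) : (p.1 i) ^ 2 ≤ Mf p := by
  have h1 : (p.1 i) ^ 2 ≤ ∑ k, (p.1 k) ^ 2 :=
    Finset.single_le_sum (f := fun k => (p.1 k) ^ 2) (fun k _ => sq_nonneg _) (Finset.mem_univ i)
  have := abs_nonneg p.2
  unfold Mf
  linarith

lemma coord_le_Mf (i : Fin 3) (p : ST3) : |p.1 i| ≤ Mf p ^ ((1:ℝ)/2) := by
  rw [← Real.sqrt_eq_rpow, ← Real.sqrt_sq_eq_abs]
  exact Real.sqrt_le_sqrt (sq_le_Mf i p)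

lemma WL_single (j : Fin 4) (p : ST3) : WL [j] p = |wt j p| := by
  simp [WL]

lemma bound_Lx (i : Fin 3) (j : Fin 4) (p : ST3) :
    |wt j p| * ‖Lx i (dir j)‖ ≤ Mf p ^ ((1:ℝ)/2) := by
  fin_cases j
  · show |wt 0 p| * ‖Lx i (dir 0)‖ ≤ Mf p ^ ((1:ℝ)/2)
    by_cases h : i = 0
    · subst h
      have h1 : Lx 0 (dir 0) = 1 := by
        simp [Lx, dir, ContinuousLinearMap.comp_apply, e3]
      rw [h1]
      simpa [wt] using coord_le_Mf 0 p
    · have h1 : Lx i (dir 0) = 0 := by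
        simp [Lx, dir, ContinuousLinearMap.comp_apply, e3, Pi.single_apply, h]
      rw [h1]
      simp [Real.rpow_nonneg (Mf_nonneg p)]
  · show |wt 1 p| * ‖Lx i (dir 1)‖ ≤ Mf p ^ ((1:ℝ)/2)
    by_cases h : i = 1
    · subst h
      have h1 : Lx 1 (dir 1) = 1 := by
        simp [Lx, dir, ContinuousLinearMap.comp_apply, e3]
      rw [h1]
      simpa [wt] using coord_le_Mf 1 p
    · have h1 : Lx i (dir 1) = 0 := by
        simp [Lx, dir, ContinuousLinearMap.comp_apply, e3, Pi.single_apply, h]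
      rw [h1]
      simp [Real.rpow_nonneg (Mf_nonneg p)]
  · show |wt 2 p| * ‖Lx i (dir 2)‖ ≤ Mf p ^ ((1:ℝ)/2)
    by_cases h : i = 2
    · subst h
      have h1 : Lx 2 (dir 2) = 1 := by
        simp [Lx, dir, ContinuousLinearMap.comp_apply, e3]
      rw [h1]
      simpa [wt] using coord_le_Mf 2 p
    · have h1 : Lx i (dir 2) = 0 := by
        simp [Lx, dir, ContinuousLinearMap.comp_apply, e3, Pi.single_apply, h]
      rw [h1]
      simp [Real.rpow_nonneg (Mf_nonneg p)]
  · show |wt 3 p| * ‖Lx i (dir 3)‖ ≤ Mf p ^ ((1:ℝ)/2)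
    have h1 : Lx i (dir 3) = 0 := by
      simp [Lx, dir, ContinuousLinearMap.comp_apply]
    rw [h1]
    simp [Real.rpow_nonneg (Mf_nonneg p)]

lemma bound_Lt (j : Fin 4) (p : ST3) : |wt j p| * ‖Lt (dir j)‖ ≤ Mf p := by
  fin_cases j
  · show |wt 0 p| * ‖Lt (dir 0)‖ ≤ Mf p
    have h1 : Lt (dir 0) = 0 := by simp [Lt, dir, ContinuousLinearMap.comp_apply]
    rw [h1]; simp [Mf_nonneg p]
  · show |wt 1 p| * ‖Lt (dir 1)‖ ≤ Mf p
    have h1 : Lt (dir 1) = 0 := by simp [Lt, dir, ContinuousLinearMap.comp_apply]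
    rw [h1]; simp [Mf_nonneg p]
  · show |wt 2 p| * ‖Lt (dir 2)‖ ≤ Mf p
    have h1 : Lt (dir 2) = 0 := by simp [Lt, dir, ContinuousLinearMap.comp_apply]
    rw [h1]; simp [Mf_nonneg p]
  · show |wt 3 p| * ‖Lt (dir 3)‖ ≤ Mf p
    have h1 : Lt (dir 3) = 1 := by simp [Lt, dir, ContinuousLinearMap.comp_apply]
    rw [h1]
    simpa [wt] using snd_le_Mf p

lemma isSym_coord {c : ℝ} (hc : 0 ≤ c) (i : Fin 3) : IsSym c 1 (fun p => Lx i p) := by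
  refine ⟨(Lx i).contDiff.contDiffOn, ?_⟩
  intro l _
  cases l with
  | nil =>
    refine ⟨1, zero_le_one, ?_⟩
    intro p hp
    simp only [iterD_nil, WL_nil, one_mul, one_mul]
    have h2 : ‖Lx i p‖ = |p.1 i| := by rw [Lx_apply]; simp [Complex.norm_real]
    rw [h2]
    exact coord_le_Mf i p
  | cons j t =>
    rcases eq_or_ne t [] with rfl | ht
    · refine ⟨1, zero_le_one, ?_⟩
      intro p hp
      rw [iterD_clm (Lx i) [] j]
      simp only [if_pos rfl, one_mul, WL_single]
      exact bound_Lx i j p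
    · refine ⟨0, le_rfl, ?_⟩
      intro p hp
      rw [iterD_clm (Lx i) t j]
      simp [if_neg ht]

lemma isSym_time {c : ℝ} (hc : 0 ≤ c) : IsSym c 2 (fun p => Lt p) := by
  refine ⟨Lt.contDiff.contDiffOn, ?_⟩
  have h22 : (2:ℝ)/2 = 1 := by norm_num
  intro l _
  cases l with
  | nil =>
    refine ⟨1, zero_le_one, ?_⟩
    intro p hp
    simp only [iterD_nil, WL_nil, one_mul, one_mul, h22, Real.rpow_one]
    have h2 : ‖Lt p‖ = |p.2| := by rw [Lt_apply]; simp [Complex.norm_real]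
    rw [h2]
    exact snd_le_Mf p
  | cons j t =>
    rcases eq_or_ne t [] with rfl | ht
    · refine ⟨1, zero_le_one, ?_⟩
      intro p hp
      rw [iterD_clm Lt [] j]
      simp only [if_pos rfl, one_mul, WL_single, h22, Real.rpow_one]
      exact bound_Lt j p
    · refine ⟨0, le_rfl, ?_⟩
      intro p hp
      rw [iterD_clm Lt t j]
      simp [if_neg ht]

/-! ### symbols depending only on `η` -/

lemma dir_3_snd : (dir 3).2 = 1 := by simp [dir]

lemma dir_snd_eq_zero {j : Fin 4} (h : j ≠ 3) : (dir j).2 = 0 := by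
  fin_cases j
  · show (dir 0).2 = 0; simp [dir]
  · show (dir 1).2 = 0; simp [dir]
  · show (dir 2).2 = 0; simp [dir]
  · exact absurd rfl h

lemma ddC_snd {h : ℝ → ℂ} {h' : ℂ} {p : ST3} (hh : HasDerivAt h h' p.2) (w : ST3) :
    ddC w (fun q => h q.2) p = w.2 • h' := by
  have H : HasFDerivAt (fun q : ST3 => h q.2)
      ((ContinuousLinearMap.smulRight (1 : ℝ →L[ℝ] ℝ) h').comp
        (ContinuousLinearMap.snd ℝ E3 ℝ)) p :=
    (hh.hasFDerivAt).comp p (ContinuousLinearMap.snd ℝ E3 ℝ).hasFDerivAt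
  rw [ddC, H.fderiv]
  simp

lemma iterD_eqOn_zero {s : Set ST3} (hs : IsOpen s) {f : ST3 → ℂ}
    (hf : Set.EqOn f (fun _ => 0) s) (l : List (Fin 4)) :
    Set.EqOn (iterD l f) (fun _ => 0) s := by
  intro p hp
  have := iterD_congr hs hf l hp
  rwa [iterD_zero] at this

theorem isSym_snd {c d : ℝ} (hc : 0 < c) (hd : 0 ≤ d) {h : ℝ → ℂ}
    (hsm : ContDiffOn ℝ (⊤:ℕ∞) h {t : ℝ | c < |t|})
    {C0 C1 : ℝ} (hC0 : 0 ≤ C0) (hC1 : 0 ≤ C1)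
    (h0 : ∀ t : ℝ, c < |t| → ‖h t‖ ≤ C0 * |t| ^ (d/2))
    (h1 : ∀ t : ℝ, c < |t| → |t| * ‖deriv h t‖ ≤ C1 * |t| ^ (d/2)) :
    IsSym c d (fun q => h q.2) := by
  have hO : IsOpen {t : ℝ | c < |t|} := isOpen_lt continuous_const continuous_abs
  have hdiff : ∀ t : ℝ, c < |t| → DifferentiableAt ℝ h t := fun t ht =>
    (hsm.contDiffAt (hO.mem_nhds ht)).differentiableAt (by simp)
  have hsm' : ContDiffOn ℝ (⊤:ℕ∞) (deriv h) {t : ℝ | c < |t|} :=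
    hsm.deriv_of_isOpen hO (le_of_eq (by norm_cast))
  have hdiff' : ∀ t : ℝ, c < |t| → DifferentiableAt ℝ (deriv h) t := fun t ht =>
    (hsm'.contDiffAt (hO.mem_nhds ht)).differentiableAt (by simp)
  have hmemO : ∀ p : ST3, p ∈ U c → c < |p.2| := fun p hp => hp
  have hpow_mono : ∀ p : ST3, |p.2| ^ (d/2) ≤ Mf p ^ (d/2) := fun p =>
    Real.rpow_le_rpow (abs_nonneg _) (snd_le_Mf p) (div_nonneg hd (by norm_num))
  -- the first derivative in the time direction
  have key1 : Set.EqOn (iterD [(3:Fin 4)] (fun q => h q.2)) (fun q => deriv h q.2) (U c) := by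
    intro p hp
    rw [iterD_cons, iterD_nil, ddC_snd ((hdiff p.2 (hmemO p hp)).hasDerivAt) (dir 3), dir_3_snd]
    simp
  -- spatial derivatives kill functions of η
  have keyx : ∀ (g : ℝ → ℂ), (∀ t : ℝ, c < |t| → DifferentiableAt ℝ g t) →
      ∀ (a : Fin 4), a ≠ 3 →
      Set.EqOn (iterD [a] (fun q => g q.2)) (fun _ => 0) (U c) := by
    intro g hg a ha p hp
    rw [iterD_cons, iterD_nil, ddC_snd ((hg p.2 (hmemO p hp)).hasDerivAt) (dir a),
      dir_snd_eq_zero ha]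
    simp
  refine ⟨?_, ?_⟩
  · intro p hp
    exact (((hsm.contDiffAt (hO.mem_nhds (hmemO p hp))).comp p contDiffAt_snd)).contDiffWithinAt
  intro l hl
  have hl' : l.Sublist ([0,1,2] ++ [3]) := hl
  obtain ⟨s, t, rfl, hs, ht⟩ := List.sublist_append_iff.1 hl'
  have hane : ∀ a ∈ s, a ≠ (3 : Fin 4) := by
    intro a ha hEq
    subst hEq
    have := hs.subset ha
    revert this
    decide
  rcases List.sublist_singleton.1 ht with rfl | rfl
  · rw [List.append_nil]
    rcases List.eq_nil_or_concat s with rfl | ⟨s₁, a, rfl⟩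
    · refine ⟨C0, hC0, ?_⟩
      intro p hp
      simp only [iterD_nil, WL_nil, one_mul]
      calc ‖h p.2‖ ≤ C0 * |p.2| ^ (d/2) := h0 p.2 (hmemO p hp)
        _ ≤ C0 * Mf p ^ (d/2) := mul_le_mul_of_nonneg_left (hpow_mono p) hC0
    · refine ⟨0, le_rfl, ?_⟩
      intro p hp
      have ha3 : a ≠ 3 := hane a (by simp [List.concat_eq_append])
      have hz : Set.EqOn (iterD (s₁.concat a) (fun q => h q.2)) (fun _ => 0) (U c) := by
        intro q hq
        rw [List.concat_eq_append, iterD_append]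
        exact iterD_eqOn_zero (isOpen_U c) (keyx h hdiff a ha3) s₁ hq
      rw [hz hp]
      simp [Real.rpow_nonneg (Mf_nonneg p)]
  · rcases List.eq_nil_or_concat s with rfl | ⟨s₁, a, rfl⟩
    · refine ⟨C1, hC1, ?_⟩
      intro p hp
      rw [List.nil_append, WL_single, key1 hp]
      have hwt : wt 3 p = p.2 := by simp [wt]
      rw [hwt]
      calc |p.2| * ‖deriv h p.2‖ ≤ C1 * |p.2| ^ (d/2) := h1 p.2 (hmemO p hp)
        _ ≤ C1 * Mf p ^ (d/2) := mul_le_mul_of_nonneg_left (hpow_mono p) hC1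
    · refine ⟨0, le_rfl, ?_⟩
      intro p hp
      have ha3 : a ≠ 3 := hane a (by simp [List.concat_eq_append])
      have h2 : Set.EqOn (iterD ([a] ++ [3]) (fun q => h q.2)) (fun _ => 0) (U c) := by
        intro q hq
        rw [iterD_append]
        rw [iterD_congr (isOpen_U c) key1 [a] hq]
        exact keyx (deriv h) hdiff' a ha3 hq
      have hz : Set.EqOn (iterD ((s₁.concat a) ++ [(3:Fin 4)]) (fun q => h q.2))
          (fun _ => 0) (U c) := by
        intro q hq
        have hre : (s₁.concat a) ++ [(3:Fin 4)] = s₁ ++ ([a] ++ [3]) := by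
          simp [List.concat_eq_append]
        rw [hre, iterD_append]
        exact iterD_eqOn_zero (isOpen_U c) h2 s₁ hq
      rw [hz hp]
      simp [Real.rpow_nonneg (Mf_nonneg p)]

/-! ### the square root symbol -/

lemma half_re : ((1:ℂ)/2) = (((1:ℝ)/2 : ℝ) : ℂ) := by push_cast; ring
lemma mhalf_re : ((1:ℂ)/2 - 1) = ((-(1:ℝ)/2 : ℝ) : ℂ) := by push_cast; ring

theorem isSym_sqrt {c : ℝ} (hc : 0 < c) :
    IsSym c 1 (fun q : ST3 => (Complex.I * ((q.2 : ℝ) : ℂ)) ^ ((1:ℂ)/2)) := by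
  have habs : ∀ t : ℝ, ‖Complex.I * (t:ℂ)‖ = |t| := by
    intro t; simp
  have hne : ∀ t : ℝ, t ≠ 0 → Complex.I * (t:ℂ) ≠ 0 := fun t ht =>
    mul_ne_zero Complex.I_ne_zero (Complex.ofReal_ne_zero.2 ht)
  have hslit : ∀ t : ℝ, t ≠ 0 → Complex.I * (t:ℂ) ∈ Complex.slitPlane := by
    intro t ht
    rw [Complex.mem_slitPlane_iff]
    right
    simpa using ht
  have htne : ∀ t : ℝ, c < |t| → t ≠ 0 := by
    intro t ht h0
    rw [h0] at ht
    simp at ht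
    linarith
  have hinner : ∀ t : ℝ, HasDerivAt (fun s : ℝ => Complex.I * ((s:ℝ):ℂ)) Complex.I t := by
    intro t
    have h1 : HasDerivAt (fun s : ℝ => ((s:ℝ):ℂ)) 1 t := by
      simpa using (hasDerivAt_id t).ofReal_comp
    simpa using h1.const_mul Complex.I
  have hDer : ∀ t : ℝ, t ≠ 0 → HasDerivAt (fun s : ℝ => (Complex.I * ((s:ℝ):ℂ)) ^ ((1:ℂ)/2))
      (((1:ℂ)/2) * (Complex.I * (t:ℂ)) ^ ((1:ℂ)/2 - 1) * Complex.I) t := by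
    intro t ht
    have houter := (Complex.hasStrictDerivAt_cpow_const (c := (1:ℂ)/2) (hslit t ht)).hasDerivAt
    exact houter.comp t (hinner t)
  have hderiv_eq : ∀ t : ℝ, c < |t| →
      deriv (fun s : ℝ => (Complex.I * ((s:ℝ):ℂ)) ^ ((1:ℂ)/2)) t
        = ((1:ℂ)/2) * (Complex.I * (t:ℂ)) ^ ((1:ℂ)/2 - 1) * Complex.I := fun t ht =>
    (hDer t (htne t ht)).deriv
  apply isSym_snd (h := fun t : ℝ => (Complex.I * ((t:ℝ):ℂ)) ^ ((1:ℂ)/2)) hc zero_le_one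
    ?_ zero_le_one zero_le_one ?_ ?_
  · -- smoothness
    intro t ht
    have ht0 := htne t ht
    have hana : AnalyticAt ℂ (fun z : ℂ => z ^ ((1:ℂ)/2)) (Complex.I * (t:ℂ)) := by
      apply AnalyticAt.cpow analyticAt_id analyticAt_const (hslit t ht0)
    have houterCD : ContDiffAt ℝ (⊤:ℕ∞) (fun z : ℂ => z ^ ((1:ℂ)/2)) (Complex.I * (t:ℂ)) :=
      (hana.contDiffAt).restrict_scalars ℝ
    have hinnerCD : ContDiffAt ℝ (⊤:ℕ∞) (fun s : ℝ => Complex.I * ((s:ℝ):ℂ)) t :=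
      (contDiff_const.mul Complex.ofRealCLM.contDiff).contDiffAt
    exact ((houterCD.comp t hinnerCD)).contDiffWithinAt
  · -- size of the function
    intro t ht
    have ht0 := htne t ht
    have h1 : ‖(Complex.I * ((t:ℝ):ℂ)) ^ ((1:ℂ)/2)‖ = |t| ^ ((1:ℝ)/2) := by
      rw [show ‖(Complex.I * ((t:ℝ):ℂ)) ^ ((1:ℂ)/2)‖
          = ‖(Complex.I * (t:ℂ)) ^ ((1:ℂ)/2)‖ from rfl,
        Complex.norm_cpow_of_ne_zero (hne t ht0), habs t, half_re]
      simp
    rw [h1, one_mul]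
  · -- size of the derivative
    intro t ht
    have ht0 := htne t ht
    have htpos : (0:ℝ) < |t| := lt_trans hc ht
    rw [hderiv_eq t ht]
    have h1 : ‖((1:ℂ)/2) * (Complex.I * (t:ℂ)) ^ ((1:ℂ)/2 - 1) * Complex.I‖
        = (1/2) * |t| ^ (-(1:ℝ)/2) := by
      rw [norm_mul, norm_mul]
      rw [show ‖(Complex.I * ((t:ℝ):ℂ)) ^ ((1:ℂ)/2 - 1)‖
          = ‖(Complex.I * (t:ℂ)) ^ ((1:ℂ)/2 - 1)‖ from rfl,
        Complex.norm_cpow_of_ne_zero (hne t ht0), habs t, mhalf_re]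
      simp
    rw [h1]
    calc |t| * ((1/2) * |t| ^ (-(1:ℝ)/2)) = (1/2) * (|t| ^ (1:ℝ) * |t| ^ (-(1:ℝ)/2)) := by
          rw [Real.rpow_one]; ring
      _ = (1/2) * |t| ^ ((1:ℝ)/2) := by
          rw [← Real.rpow_add htpos]; norm_num
      _ ≤ 1 * |t| ^ ((1:ℝ)/2) := by
          have := Real.rpow_nonneg htpos.le ((1:ℝ)/2)
          linarith

/-! ### the cut-off symbol -/

theorem isSym_cutoff {ω : ℝ} (hω : 0 < ω) {χ : ℝ → ℝ}
    (hχsmooth : ContDiff ℝ (⊤:ℕ∞) χ) (hχsupp : HasCompactSupport χ)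
    (hχzero : ∀ η : ℝ, 1 ≤ |η| → χ η = 0) :
    IsSym (ω/4) 0 (fun q : ST3 => ((1 - χ (q.2/ω) : ℝ) : ℂ)) := by
  have hc : (0:ℝ) < ω/4 := by linarith
  obtain ⟨K0, hK0⟩ := hχsupp.exists_bound_of_continuous hχsmooth.continuous
  have hK0' : (0:ℝ) ≤ K0 := le_trans (norm_nonneg (χ 0)) (hK0 0)
  have hχcont' : Continuous (deriv χ) := hχsmooth.continuous_deriv (by exact_mod_cast le_top)
  obtain ⟨K1, hK1⟩ := hχsupp.deriv.exists_bound_of_continuous hχcont'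
  have hK1' : (0:ℝ) ≤ K1 := le_trans (norm_nonneg (deriv χ 0)) (hK1 0)
  have hχdiff : Differentiable ℝ χ := hχsmooth.differentiable (by simp)
  have hDer : ∀ t : ℝ, HasDerivAt (fun s : ℝ => ((1 - χ (s/ω) : ℝ) : ℂ))
      ((-(deriv χ (t/ω) * (1/ω)) : ℝ) : ℂ) t := by
    intro t
    have hin : HasDerivAt (fun s : ℝ => s/ω) (1/ω) t := (hasDerivAt_id t).div_const ω
    have hmid : HasDerivAt (fun s : ℝ => χ (s/ω)) (deriv χ (t/ω) * (1/ω)) t := by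
      exact ((hχdiff (t/ω)).hasDerivAt).comp t hin
    have hsub : HasDerivAt (fun s : ℝ => 1 - χ (s/ω)) (-(deriv χ (t/ω) * (1/ω))) t :=
      hmid.const_sub 1
    simpa [Function.comp_def] using Complex.ofRealCLM.hasFDerivAt.comp_hasDerivAt t hsub
  have hder0 : ∀ s : ℝ, 1 < |s| → deriv χ s = 0 := by
    intro s hs
    have hopen : IsOpen {x : ℝ | 1 < |x|} := isOpen_lt continuous_const continuous_abs
    have hev : χ =ᶠ[nhds s] (fun _ => 0) :=
      Filter.eventuallyEq_of_mem (hopen.mem_nhds hs) (fun x hx => hχzero x (le_of_lt hx))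
    rw [hev.deriv_eq]
    simp
  apply isSym_snd (h := fun t : ℝ => ((1 - χ (t/ω) : ℝ) : ℂ)) hc le_rfl ?_
    (by linarith : (0:ℝ) ≤ 1 + K0) hK1' ?_ ?_
  · -- smoothness
    have hCD : ContDiff ℝ (⊤:ℕ∞) (fun t : ℝ => ((1 - χ (t/ω) : ℝ) : ℂ)) :=
      Complex.ofRealCLM.contDiff.comp (contDiff_const.sub (hχsmooth.comp (contDiff_id.div_const ω)))
    exact hCD.contDiffOn
  · intro t ht
    rw [show (0:ℝ)/2 = 0 by norm_num, Real.rpow_zero, mul_one]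
    rw [Complex.norm_real]
    have := hK0 (t/ω)
    calc ‖(1 - χ (t/ω) : ℝ)‖ ≤ ‖(1:ℝ)‖ + ‖χ (t/ω)‖ := norm_sub_le _ _
      _ ≤ 1 + K0 := by rw [norm_one]; linarith
  · intro t ht
    rw [show (0:ℝ)/2 = 0 by norm_num, Real.rpow_zero, mul_one]
    rw [(hDer t).deriv, Complex.norm_real]
    rcases le_or_gt |t| ω with hcase | hcase
    · calc |t| * ‖(-(deriv χ (t/ω) * (1/ω)) : ℝ)‖ = |t| * (|deriv χ (t/ω)| * (1/ω)) := by
            rw [Real.norm_eq_abs, abs_neg, abs_mul]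
            congr 2
            rw [abs_of_pos (by positivity)]
        _ ≤ ω * (K1 * (1/ω)) := by
            apply mul_le_mul hcase ?_ (by positivity) hω.le
            apply mul_le_mul_of_nonneg_right ?_ (by positivity)
            simpa [Real.norm_eq_abs] using hK1 (t/ω)
        _ = K1 := by field_simp
    · have h0 : deriv χ (t/ω) = 0 := by
        apply hder0
        rw [abs_div, abs_of_pos hω]
        rw [lt_div_iff₀ hω]
        linarith
      rw [h0]
      simp [hK1']

/-! ### the symbol `|ξ|² + iη` -/

theorem isSym_sigma {c : ℝ} (hc : 0 ≤ c) :
    IsSym c 2 (fun p : ST3 => (((∑ i, (p.1 i)^2 : ℝ)) : ℂ) + Complex.I * ((p.2:ℝ):ℂ)) := by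
  have two_eq : (1:ℝ) + 1 = 2 := by norm_num
  have h1 : IsSym c 2 (fun p : ST3 => Lx 0 p * Lx 0 p) := by
    have := IsSym.mul hc (isSym_coord hc 0) (isSym_coord hc 0); rwa [two_eq] at this
  have h2 : IsSym c 2 (fun p : ST3 => Lx 1 p * Lx 1 p) := by
    have := IsSym.mul hc (isSym_coord hc 1) (isSym_coord hc 1); rwa [two_eq] at this
  have h3 : IsSym c 2 (fun p : ST3 => Lx 2 p * Lx 2 p) := by
    have := IsSym.mul hc (isSym_coord hc 2) (isSym_coord hc 2); rwa [two_eq] at this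
  have h4 : IsSym c 2 (fun p : ST3 => Complex.I * Lt p) := IsSym.cmul _ (isSym_time hc)
  have h5 := h1.add (h2.add (h3.add h4))
  have hfun : (fun p : ST3 => (((∑ i, (p.1 i)^2 : ℝ)) : ℂ) + Complex.I * ((p.2:ℝ):ℂ))
      = (fun p : ST3 => Lx 0 p * Lx 0 p
          + (Lx 1 p * Lx 1 p + (Lx 2 p * Lx 2 p + Complex.I * Lt p))) := by
    funext p
    rw [Lx_apply, Lx_apply, Lx_apply, Lt_apply, Fin.sum_univ_three]
    push_cast
    ring
  rw [hfun]
  exact h5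

lemma sigma_lower {c : ℝ} (hc : 0 ≤ c) : ∀ p ∈ U c,
    (Real.sqrt 2)⁻¹ * Mf p ^ ((2:ℝ)/2)
      ≤ ‖(((∑ i, (p.1 i)^2 : ℝ)) : ℂ) + Complex.I * ((p.2:ℝ):ℂ)‖ := by
  intro p hp
  set s := (∑ i, (p.1 i)^2 : ℝ) with hs_def
  have hs : 0 ≤ s := Finset.sum_nonneg fun i _ => sq_nonneg _
  have hnorm : ‖((s : ℂ) + Complex.I * ((p.2:ℝ):ℂ))‖ = Real.sqrt (s^2 + p.2^2) := by
    have hz : ((s : ℂ) + Complex.I * ((p.2:ℝ):ℂ)) = ⟨s, p.2⟩ := by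
      apply Complex.ext <;> simp
    rw [hz, show ‖(⟨s, p.2⟩ : ℂ)‖ = ‖(⟨s, p.2⟩ : ℂ)‖ from rfl, Complex.norm_def,
      Complex.normSq_mk]
    ring_nf
  rw [hnorm, show (2:ℝ)/2 = 1 by norm_num, Real.rpow_one]
  have hMf : Mf p = s + |p.2| := rfl
  rw [hMf]
  have hsqrt2 : (0:ℝ) < Real.sqrt 2 := Real.sqrt_pos.2 (by norm_num)
  rw [inv_mul_le_iff₀ hsqrt2, ← Real.sqrt_mul (by norm_num : (0:ℝ) ≤ 2)]
  rw [Real.le_sqrt (add_nonneg hs (abs_nonneg _)) (by positivity)]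
  nlinarith [sq_nonneg (s - |p.2|), sq_abs p.2]

/-! ### bridging `MDer` and `iterD` -/

def lofε (ε : Fin 4 → ℕ) : List (Fin 4) :=
  List.replicate (ε 0) 0 ++ (List.replicate (ε 1) 1
    ++ (List.replicate (ε 2) 2 ++ List.replicate (ε 3) 3))

lemma iterD_replicate (j : Fin 4) (n : ℕ) (f : ST3 → ℂ) :
    iterD (List.replicate n j) f = (ddC (dir j))^[n] f := by
  induction n with
  | zero => rfl
  | succ n ih => rw [List.replicate_succ, iterD_cons, ih, Function.iterate_succ_apply']

lemma MDer_eq_iterD (ε : Fin 4 → ℕ) (f : ST3 → ℂ) : MDer ε f = iterD (lofε ε) f := by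
  rw [lofε, iterD_append, iterD_append, iterD_append, iterD_replicate, iterD_replicate,
    iterD_replicate, iterD_replicate]
  rfl

lemma lofε_sublist {ε : Fin 4 → ℕ} (hε : ∀ i, ε i ≤ 1) :
    (lofε ε).Sublist [0,1,2,3] := by
  have h : ∀ (j : Fin 4) (n : ℕ), n ≤ 1 → (List.replicate n j).Sublist [j] := by
    intro j n hn
    interval_cases n
    · simp
    · simp
  exact (h 0 _ (hε 0)).append ((h 1 _ (hε 1)).append ((h 2 _ (hε 2)).append (h 3 _ (hε 3))))

lemma WL_lofε (ε : Fin 4 → ℕ) (p : ST3) :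
    WL (lofε ε) p = |p.1 0| ^ (ε 0) * |p.1 1| ^ (ε 1) * |p.1 2| ^ (ε 2) * |p.2| ^ (ε 3) := by
  simp only [WL, lofε, List.map_append, List.prod_append, List.map_replicate,
    List.prod_replicate]
  have w0 : wt 0 p = p.1 0 := rfl
  have w1 : wt 1 p = p.1 1 := rfl
  have w2 : wt 2 p = p.1 2 := rfl
  have w3 : wt 3 p = p.2 := rfl
  rw [w0, w1, w2, w3, mul_assoc, mul_assoc]

end Marc

open Marc

/-- The multiplier `m_l` is smooth, bounded and satisfies the Marcinkiewicz condition
(from the proof of Theorem 4.17 / `ss_RegularityThm`). -/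
theorem multiplier_Marcinkiewicz
    (ω : ℝ) (hω : 0 < ω) (χ : ℝ → ℝ)
    (hχsmooth : ContDiff ℝ (⊤ : ℕ∞) χ) (hχsupp : HasCompactSupport χ)
    (hχone : ∀ η : ℝ, |η| ≤ 1 / 2 → χ η = 1)
    (hχzero : ∀ η : ℝ, 1 ≤ |η| → χ η = 0)
    (l : Fin 3) :
    ContDiff ℝ (⊤ : ℕ∞) (ml ω χ l) ∧
    (∃ B : ℝ, ∀ p : ST3, ‖ml ω χ l p‖ ≤ B) ∧
    (∃ B : ℝ, ∀ ε : Fin 4 → ℕ, (∀ i, ε i ≤ 1) → ∀ p : ST3,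
      ‖(((p.1 0) ^ (ε 0) * (p.1 1) ^ (ε 1) * (p.1 2) ^ (ε 2) * (p.2) ^ (ε 3) : ℝ) : ℂ)
          * MDer ε (ml ω χ l) p‖ ≤ B) := by
  set c := ω/4 with hc_def
  have hc0 : (0:ℝ) < c := by rw [hc_def]; linarith
  -- the symbol estimate for the full multiplier
  have hcut := isSym_cutoff hω hχsmooth hχsupp hχzero
  have hsq := isSym_sqrt hc0
  have hsig := isSym_sigma hc0.le
  have hsqrt2 : (0:ℝ) < (Real.sqrt 2)⁻¹ := inv_pos.2 (Real.sqrt_pos.2 (by norm_num))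
  have hinv := IsSym.inv hc0.le hsig hsqrt2 (sigma_lower hc0.le)
  have hxi := IsSym.mul hc0.le (isSym_coord hc0.le l) hinv
  rw [show (1:ℝ) + -2 = -1 by norm_num] at hxi
  have hsx := IsSym.mul hc0.le hsq hxi
  rw [show (1:ℝ) + -1 = 0 by norm_num] at hsx
  have hml0 := IsSym.mul hc0.le hcut hsx
  rw [show (0:ℝ) + 0 = 0 by norm_num] at hml0
  have hml_eq : ml ω χ l = (fun p : ST3 => ((1 - χ (p.2/ω) : ℝ) : ℂ)
      * ((Complex.I * ((p.2:ℝ):ℂ)) ^ ((1:ℂ)/2)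
        * (Lx l p * (((((∑ i, (p.1 i)^2 : ℝ)) : ℂ) + Complex.I * ((p.2:ℝ):ℂ))⁻¹)))) := by
    funext p
    simp only [ml, Lx_apply]
    rw [div_eq_mul_inv]
    ring
  have hml : IsSym c 0 (ml ω χ l) := by rw [hml_eq]; exact hml0
  -- the multiplier vanishes near `η = 0`
  set V : Set ST3 := {p : ST3 | |p.2| < ω/2} with hV_def
  have hVopen : IsOpen V := isOpen_lt (continuous_abs.comp continuous_snd) continuous_const
  have hmlV : Set.EqOn (ml ω χ l) (fun _ => 0) V := by
    intro p hp
    have hp' : |p.2| < ω/2 := hp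
    have h1 : χ (p.2/ω) = 1 := by
      apply hχone
      rw [abs_div, abs_of_pos hω, div_le_iff₀ hω]
      linarith
    show ml ω χ l p = 0
    simp [ml, h1]
  have hcover : ∀ p : ST3, p ∈ U c ∨ p ∈ V := by
    intro p
    rcases lt_or_ge |p.2| (ω/2) with h | h
    · right; exact h
    · left
      show c < |p.2|
      rw [hc_def]
      linarith
  -- the Marcinkiewicz bound
  have hthird : ∃ B : ℝ, 0 ≤ B ∧ ∀ ε : Fin 4 → ℕ, (∀ i, ε i ≤ 1) → ∀ p : ST3,
      ‖(((p.1 0) ^ (ε 0) * (p.1 1) ^ (ε 1) * (p.1 2) ^ (ε 2) * (p.2) ^ (ε 3) : ℝ) : ℂ)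
          * MDer ε (ml ω χ l) p‖ ≤ B := by
    obtain ⟨CG, hCG⟩ := hml.boundFun
    refine ⟨(([0,1,2,3] : List (Fin 4)).sublists.map (fun s => CG s)).sum, ?_, ?_⟩
    · apply List.sum_nonneg
      intro x hx
      obtain ⟨sl, hsl, rfl⟩ := List.mem_map.1 hx
      exact (hCG sl (List.mem_sublists.1 hsl)).1
    have hB0 : (0:ℝ) ≤ (([0,1,2,3] : List (Fin 4)).sublists.map (fun s => CG s)).sum := by
      apply List.sum_nonneg
      intro x hx
      obtain ⟨sl, hsl, rfl⟩ := List.mem_map.1 hx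
      exact (hCG sl (List.mem_sublists.1 hsl)).1
    have hBmem : ∀ s : List (Fin 4), s.Sublist [0,1,2,3] →
        CG s ≤ (([0,1,2,3] : List (Fin 4)).sublists.map (fun s => CG s)).sum := by
      intro s hs
      apply List.single_le_sum ?_ _ (List.mem_map.2 ⟨s, List.mem_sublists.2 hs, rfl⟩)
      intro x hx
      obtain ⟨sl, hsl, rfl⟩ := List.mem_map.1 hx
      exact (hCG sl (List.mem_sublists.1 hsl)).1
    intro ε hε p
    have hWnorm : ‖(((p.1 0) ^ (ε 0) * (p.1 1) ^ (ε 1) * (p.1 2) ^ (ε 2)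
        * (p.2) ^ (ε 3) : ℝ) : ℂ)‖ = WL (lofε ε) p := by
      rw [Complex.norm_real, Real.norm_eq_abs, WL_lofε]
      rw [abs_mul, abs_mul, abs_mul, abs_pow, abs_pow, abs_pow, abs_pow]
    rw [norm_mul, hWnorm, MDer_eq_iterD]
    rcases hcover p with hU | hV
    · have hb := (hCG (lofε ε) (lofε_sublist hε)).2 p hU
      rw [show (0:ℝ)/2 = 0 by norm_num, Real.rpow_zero, mul_one] at hb
      exact le_trans hb (hBmem _ (lofε_sublist hε))
    · rw [iterD_eqOn_zero hVopen hmlV (lofε ε) hV]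
      simpa using hB0
  obtain ⟨B, hB0, hB⟩ := hthird
  refine ⟨?_, ⟨B, ?_⟩, ⟨B, fun ε hε p => hB ε hε p⟩⟩
  · -- smoothness
    rw [contDiff_iff_contDiffAt]
    intro p
    rcases hcover p with hU | hV
    · exact hml.smooth.contDiffAt ((isOpen_U c).mem_nhds hU)
    · exact (contDiffAt_const (c := (0:ℂ))).congr_of_eventuallyEq
        (Filter.eventuallyEq_of_mem (hVopen.mem_nhds hV) hmlV)
  · -- boundedness
    intro p
    have := hB (fun _ => 0) (fun i => by norm_num) p
    simpa [MDer] using this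


end
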